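/- Let B₋ be nonsingular with B₋ p₋ = −g₋, B₋ g = g, gᵀp₋ = 0, g ≠ 0, g₋ᵀp₋ ≠ 0, and A = I − (1/(p₋ᵀg₋)) p₋ gᵀ. Define U = Aᵀ A − B₋ and B = B₋ + U = Aᵀ A. Then the solution p of B p = −g satisfies p = −A⁻¹ g, i.e., p equals the CG direction (δ = 1). -/

import Mathlib

open Matrix

lemma vmv_mul_vmv {n : ℕ} (a b c d : Fin n → ℝ) :
    vecMulVec a b * vecMulVec c d = (b ⬝ᵥ c) • vecMulVec a d := by
  ext i j
  simp only [mul_apply, vecMulVec_apply, Matrix.smul_apply, smul_eq_mul, dotProduct, Finset.sum_mul]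
  apply Finset.sum_congr rfl
  intro k _; ring

lemma vmv_mulVec {n : ℕ} (a b v : Fin n → ℝ) :
    (vecMulVec a b).mulVec v = (b ⬝ᵥ v) • a := by
  funext i
  simp only [mulVec, dotProduct, vecMulVec_apply, Pi.smul_apply, smul_eq_mul, Finset.sum_mul]
  apply Finset.sum_congr rfl
  intro k _; ring

lemma vmv_transpose {n : ℕ} (a b : Fin n → ℝ) :
    (vecMulVec a b)ᵀ = vecMulVec b a := by
  ext i j
  simp [vecMulVec_apply, mul_comm]

/-- with B = AᵀA, the solution p of Bp = −g equals the CG direction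
    −A⁻¹g (δ = 1). -/
theorem stmt5 {n : ℕ} (pm gm g : Fin n → ℝ) (Bm : Matrix (Fin n) (Fin n) ℝ)
    (hBm : IsUnit Bm) (hBmpm : Bm.mulVec pm = -gm) (hBmg : Bm.mulVec g = g)
    (hgp : g ⬝ᵥ pm = 0) (hg : g ≠ 0) (hgmpm : gm ⬝ᵥ pm ≠ 0)
    (A U B : Matrix (Fin n) (Fin n) ℝ)
    (hA : A = 1 - (1 / (pm ⬝ᵥ gm)) • Matrix.vecMulVec pm g)
    (hU : U = Aᵀ * A - Bm) (hB : B = Bm + U)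
    (p : Fin n → ℝ) (hp : B.mulVec p = -g) :
    p = -(A⁻¹.mulVec g) := by
  set c : ℝ := pm ⬝ᵥ gm with hc
  set M : Matrix (Fin n) (Fin n) ℝ := vecMulVec pm g with hM
  have hMM : M * M = 0 := by
    rw [hM, vmv_mul_vmv, hgp, zero_smul]
  have hright : A * (1 + (1 / c) • M) = 1 := by
    rw [hA]
    simp only [sub_mul, mul_add, mul_one, one_mul, smul_mul_assoc, mul_smul_comm, hMM,
      smul_zero, sub_zero, neg_smul, one_smul, add_zero]
    abel
  have hleft : (1 + (1 / c) • M) * A = 1 := by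
    rw [hA]
    simp only [mul_sub, add_mul, mul_one, one_mul, smul_mul_assoc, mul_smul_comm, hMM,
      smul_zero, sub_zero, neg_smul, one_smul, add_zero]
    abel
  have hAinv : A⁻¹ = 1 + (1 / c) • M := Matrix.inv_eq_right_inv hright
  have hdet : A.det * (1 + (1 / c) • M).det = 1 := by
    rw [← Matrix.det_mul, hright, Matrix.det_one]
  have hdetA : IsUnit A.det := IsUnit.of_mul_eq_one _ hdet
  have hdetAt : IsUnit Aᵀ.det := by rwa [Matrix.det_transpose]
  have hAtg : Aᵀ.mulVec g = g := by
    rw [hA, hM]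
    simp [transpose_sub, transpose_one, transpose_smul, sub_mulVec, one_mulVec,
      smul_mulVec, vmv_transpose, vmv_mulVec, dotProduct_comm pm g, hgp]
  have hBA : B = Aᵀ * A := by rw [hB, hU, add_sub_cancel]
  have hAt : Aᵀ.mulVec (A.mulVec p) = Aᵀ.mulVec (-g) := by
    rw [mulVec_mulVec, ← hBA, hp, mulVec_neg, hAtg]
  have hAp : A.mulVec p = -g := by
    have h2 := congrArg (fun v => (Aᵀ)⁻¹.mulVec v) hAt
    simpa [mulVec_mulVec, ← Matrix.mul_assoc, Matrix.nonsing_inv_mul _ hdetAt] using h2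
  have h3 := congrArg (fun v => A⁻¹.mulVec v) hAp
  simpa [mulVec_mulVec, Matrix.nonsing_inv_mul _ hdetA, mulVec_neg] using h3
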